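/- Let d ≥ 2 and set ν = d/2 − 1. There exists a constant C < ∞ depending only on d such that for all δ, y ∈ (0,1) and all u > δ: p^{(d)}(1,y;u) / p^{(d)}(1−δ,y;u) ≥ 1 − δ(1−y)/u − C·δ. -/

import Mathlib

open Real Set

/-- The modified Bessel function of the first kind,
`I_ν(z) = ∑_{m≥0} (z/2)^{2m+ν} / (m! Γ(m+ν+1))`. -/
noncomputable def besselI (ν z : ℝ) : ℝ :=
  ∑' m : ℕ, (z / 2) ^ (2 * (m : ℝ) + ν) / ((Nat.factorial m : ℝ) * Real.Gamma ((m : ℝ) + ν + 1))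

/-- The `d`-dimensional Bessel transition density (with `ν = d/2 − 1`):
`p^{(d)}(x,y;u) = (y/u) (y/x)^ν exp(−(x²+y²)/(2u)) I_ν(xy/u)`. -/
noncomputable def besselDensity (ν x y u : ℝ) : ℝ :=
  (y / u) * (y / x) ^ ν * Real.exp (-(x ^ 2 + y ^ 2) / (2 * u)) * besselI ν (x * y / u)

namespace BesselAux

noncomputable def al (ν : ℝ) (m : ℕ) : ℝ :=
  1 / (4 ^ m * (Nat.factorial m : ℝ) * Real.Gamma ((m : ℝ) + ν + 1))

noncomputable def be (N : ℕ) (m : ℕ) : ℝ := 1 / (Nat.factorial (2 * m + 2 * N) : ℝ)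

lemma gamma_pos {ν : ℝ} (hν : 0 ≤ ν) (m : ℕ) : 0 < Real.Gamma ((m : ℝ) + ν + 1) :=
  Real.Gamma_pos_of_pos (by positivity)

lemma gamma_succ {ν : ℝ} (hν : 0 ≤ ν) (m : ℕ) :
    Real.Gamma (((m : ℕ) + 1 : ℕ) + ν + 1) = ((m : ℝ) + ν + 1) * Real.Gamma ((m : ℝ) + ν + 1) := by
  have h : (((m : ℕ) + 1 : ℕ) : ℝ) + ν + 1 = ((m : ℝ) + ν + 1) + 1 := by push_cast; ring
  rw [h, Real.Gamma_add_one (by positivity)]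

lemma gamma_ge {ν : ℝ} (hν : 0 ≤ ν) (m : ℕ) :
    (Nat.factorial m : ℝ) * Real.Gamma (ν + 1) ≤ Real.Gamma ((m : ℝ) + ν + 1) := by
  induction m with
  | zero => simp
  | succ k ih =>
      rw [gamma_succ hν k, Nat.factorial_succ]
      push_cast
      have h1 : (0:ℝ) < Real.Gamma (ν + 1) := Real.Gamma_pos_of_pos (by positivity)
      have h2 : ((k:ℝ) + 1) ≤ (k : ℝ) + ν + 1 := by linarith
      calc ((k:ℝ)+1) * (Nat.factorial k) * Real.Gamma (ν+1)
          = ((k:ℝ)+1) * ((Nat.factorial k) * Real.Gamma (ν+1)) := by ring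
        _ ≤ ((k:ℝ)+ν+1) * Real.Gamma ((k:ℝ)+ν+1) := by
            apply mul_le_mul h2 ih (by positivity) (by positivity)

lemma al_pos {ν : ℝ} (hν : 0 ≤ ν) (m : ℕ) : 0 < al ν m := by
  have := gamma_pos hν m
  have : (0:ℝ) < Nat.factorial m := by positivity
  unfold al; positivity

lemma be_pos (N m : ℕ) : 0 < be N m := by
  unfold be; positivity

noncomputable def Gs (ν z : ℝ) : ℝ := ∑' m : ℕ, al ν m * z ^ (2 * m)

noncomputable def fs (N : ℕ) (z : ℝ) : ℝ := ∑' m : ℕ, be N m * z ^ (2 * m)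

lemma summable_Gs {ν : ℝ} (hν : 0 ≤ ν) (z : ℝ) :
    Summable (fun m : ℕ => al ν m * z ^ (2 * m)) := by
  have h1 : (0:ℝ) < Real.Gamma (ν + 1) := Real.Gamma_pos_of_pos (by positivity)
  have hnn : ∀ m : ℕ, 0 ≤ al ν m * z ^ (2 * m) := by
    intro m
    have := al_pos hν m
    have : (0:ℝ) ≤ z ^ (2*m) := by rw [pow_mul]; positivity
    positivity
  have hle : ∀ m : ℕ, al ν m * z ^ (2 * m)
      ≤ (z ^ 2 / 4) ^ m / (Nat.factorial m : ℝ) * (Real.Gamma (ν+1))⁻¹ := by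
    intro m
    have hg := gamma_pos hν m
    have hgge := gamma_ge hν m
    have hfac : (1:ℝ) ≤ Nat.factorial m := by
      exact_mod_cast Nat.one_le_iff_ne_zero.mpr (Nat.factorial_ne_zero m)
    have hΓ : Real.Gamma (ν+1) ≤ Real.Gamma ((m:ℝ) + ν + 1) := by nlinarith
    have h2 : al ν m * z^(2*m) = z^(2*m) / (4^m * (Nat.factorial m : ℝ) * Real.Gamma ((m:ℝ)+ν+1)) := by
      rw [al]; ring
    have h3 : (z ^ 2 / 4) ^ m / (Nat.factorial m : ℝ) * (Real.Gamma (ν+1))⁻¹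
        = z^(2*m) / (4^m * (Nat.factorial m : ℝ) * Real.Gamma (ν+1)) := by
      rw [div_pow, pow_mul]; ring
    rw [h2, h3]
    gcongr
    rw [pow_mul]; positivity
  exact Summable.of_nonneg_of_le hnn hle ((Real.summable_pow_div_factorial (z^2/4)).mul_right _)

lemma summable_fs (N : ℕ) (z : ℝ) :
    Summable (fun m : ℕ => be N m * z ^ (2 * m)) := by
  have hnn : ∀ m : ℕ, 0 ≤ be N m * z ^ (2 * m) := by
    intro m
    have := be_pos N m
    have : (0:ℝ) ≤ z ^ (2*m) := by rw [pow_mul]; positivity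
    positivity
  have hle : ∀ m : ℕ, be N m * z ^ (2 * m) ≤ (z ^ 2) ^ m / (Nat.factorial m : ℝ) := by
    intro m
    have hf : (Nat.factorial m : ℝ) ≤ (Nat.factorial (2*m+2*N) : ℝ) := by
      exact_mod_cast Nat.factorial_le (by omega)
    have h2 : be N m * z^(2*m) = z^(2*m) / (Nat.factorial (2*m+2*N) : ℝ) := by
      rw [be]; ring
    rw [h2, ← pow_mul]
    gcongr
    rw [pow_mul]; positivity
  exact Summable.of_nonneg_of_le hnn hle (Real.summable_pow_div_factorial (z^2))



lemma Gs_pos {ν : ℝ} (hν : 0 ≤ ν) (z : ℝ) : 0 < Gs ν z := by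
  apply Summable.tsum_pos (summable_Gs hν z)
  · intro m
    have := al_pos hν m
    have : (0:ℝ) ≤ z ^ (2*m) := by rw [pow_mul]; positivity
    positivity
  · show 0 < al ν 0 * z ^ (2*0)
    simpa using al_pos hν 0

lemma fs_pos (N : ℕ) (z : ℝ) : 0 < fs N z := by
  apply Summable.tsum_pos (summable_fs N z)
  · intro m
    have := be_pos N m
    have : (0:ℝ) ≤ z ^ (2*m) := by rw [pow_mul]; positivity
    positivity
  · show 0 < be N 0 * z ^ (2*0)
    simpa using be_pos N 0

lemma besselI_eq {ν z : ℝ} (hν : 0 ≤ ν) (hz : 0 < z) :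
    besselI ν z = (z/2) ^ ν * Gs ν z := by
  have h2 : (0:ℝ) < z/2 := by linarith
  rw [besselI, Gs, ← tsum_mul_left]
  apply tsum_congr
  intro m
  have e1 : (z/2) ^ (2*(m:ℝ) + ν) = (z/2) ^ (2*m : ℕ) * (z/2) ^ ν := by
    rw [Real.rpow_add h2]
    congr 1
    rw [← Real.rpow_natCast (z/2) (2*m)]
    congr 1
    push_cast; ring
  have e2 : (z/2 : ℝ) ^ (2*m : ℕ) = z ^ (2*m) / 4 ^ m := by
    rw [div_pow, pow_mul, pow_mul]; norm_num
  rw [e1, e2, al]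
  ring

lemma besselI_pos {ν z : ℝ} (hν : 0 ≤ ν) (hz : 0 < z) : 0 < besselI ν z := by
  rw [besselI_eq hν hz]
  have := Gs_pos hν z
  have : (0:ℝ) < z/2 := by linarith
  positivity

/-- partial sum of cosh series -/
noncomputable def Sc (N : ℕ) (z : ℝ) : ℝ := ∑ j ∈ Finset.range N, z ^ (2*j) / (Nat.factorial (2*j) : ℝ)

/-- its derivative -/
noncomputable def Scd (N : ℕ) (z : ℝ) : ℝ :=
  ∑ j ∈ Finset.range N, (2*j : ℕ) * z ^ (2*j - 1) / (Nat.factorial (2*j) : ℝ)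

/-- second derivative -/
noncomputable def Scdd (N : ℕ) (z : ℝ) : ℝ :=
  ∑ j ∈ Finset.range N, (2*j : ℕ) * ((2*j - 1 : ℕ) * z ^ (2*j - 1 - 1)) / (Nat.factorial (2*j) : ℝ)

lemma hasDerivAt_Sc (N : ℕ) (z : ℝ) : HasDerivAt (fun x => Sc N x) (Scd N z) z := by
  apply HasDerivAt.fun_sum
  intro j _
  exact (hasDerivAt_pow (2*j) z).div_const _

lemma hasDerivAt_Scd (N : ℕ) (z : ℝ) : HasDerivAt (fun x => Scd N x) (Scdd N z) z := by
  apply HasDerivAt.fun_sum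
  intro j _
  exact (((hasDerivAt_pow (2*j-1) z).const_mul ((2*j : ℕ) : ℝ)).div_const _)

lemma telescope {N : ℕ} (hN : 1 ≤ N) (z : ℝ) :
    Sc N z - Scdd N z = z ^ (2*(N-1)) / (Nat.factorial (2*(N-1)) : ℝ) := by
  obtain ⟨M, rfl⟩ : ∃ M, N = M + 1 := ⟨N - 1, by omega⟩
  have hdd : Scdd (M+1) z = Sc M z := by
    rw [Scdd, Finset.sum_range_succ']
    have h0 : ((2*0 : ℕ) : ℝ) * ((2*0 - 1 : ℕ) * z ^ (2*0 - 1 - 1)) / (Nat.factorial (2*0) : ℝ) = 0 := by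
      norm_num
    rw [h0, add_zero, Sc]
    apply Finset.sum_congr rfl
    intro j _
    have e2 : 2*(j+1) - 1 - 1 = 2*j := by omega
    have e1 : 2*(j+1) - 1 = 2*j+1 := by omega
    have e3 : 2*(j+1) = 2*j+1+1 := by omega
    rw [e2, e1, e3, Nat.factorial_succ, Nat.factorial_succ]
    have hf : (0:ℝ) < (Nat.factorial (2*j) : ℝ) := by positivity
    push_cast
    field_simp
  rw [hdd]
  simp only [Sc, Nat.add_sub_cancel, Finset.sum_range_succ]
  ring

lemma Sc_zero {N : ℕ} (hN : 1 ≤ N) : Sc N 0 = 1 := by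
  rw [Sc]
  rw [Finset.sum_eq_single 0]
  · norm_num
  · intro j _ hj
    have : 2*j ≠ 0 := by omega
    rw [zero_pow this]; simp
  · intro h
    exact absurd (Finset.mem_range.mpr (by omega)) h

lemma Scd_zero (N : ℕ) : Scd N 0 = 0 := by
  rw [Scd]
  apply Finset.sum_eq_zero
  intro j _
  rcases Nat.eq_zero_or_pos j with rfl | hj
  · norm_num
  · have : 2*j - 1 ≠ 0 := by omega
    rw [zero_pow this]; simp

lemma key1 {N : ℕ} (hN : 1 ≤ N) {z : ℝ} (hz : 0 ≤ z) :
    Real.exp (-z) ≤ Sc N z - Scd N z := by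
  set W : ℝ → ℝ := fun x => Real.exp x * (Sc N x - Scd N x) with hW
  have hder : ∀ x : ℝ, HasDerivAt W (Real.exp x * (Sc N x - Scdd N x)) x := by
    intro x
    have h1 := (Real.hasDerivAt_exp x).fun_mul ((hasDerivAt_Sc N x).fun_sub (hasDerivAt_Scd N x))
    refine h1.congr_deriv ?_
    ring
  have hmono : MonotoneOn W (Ici 0) := by
    apply monotoneOn_of_deriv_nonneg (convex_Ici 0)
    · exact fun x _ => ((hder x).continuousAt).continuousWithinAt
    · intro x _
      exact ((hder x).differentiableAt).differentiableWithinAt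
    · intro x hx
      rw [(hder x).deriv, telescope hN]
      have : (0:ℝ) ≤ x ^ (2*(N-1)) := by rw [pow_mul]; positivity
      positivity
  have hW0 : W 0 = 1 := by
    rw [hW]; simp [Sc_zero hN, Scd_zero]
  have := hmono (mem_Ici.mpr le_rfl) (mem_Ici.mpr hz) hz
  rw [hW0] at this
  have hexp : (0:ℝ) < Real.exp z := Real.exp_pos z
  rw [Real.exp_neg]
  rw [inv_le_iff_one_le_mul₀ hexp]
  simpa [hW, mul_comm] using this

noncomputable def Ts (N : ℕ) (z : ℝ) : ℝ := Real.cosh z - Sc N z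

lemma Ts_eq (N : ℕ) (z : ℝ) : Ts N z = z ^ (2*N) * fs N z := by
  have hsum : Summable (fun n : ℕ => z ^ (2*n) / (Nat.factorial (2*n) : ℝ)) :=
    (Real.hasSum_cosh z).summable
  have h := (Summable.sum_add_tsum_nat_add (f := fun n : ℕ => z ^ (2*n) / (Nat.factorial (2*n) : ℝ)) N hsum).symm
  rw [Ts, Real.cosh_eq_tsum, h, Sc]
  rw [add_sub_cancel_left, fs, ← tsum_mul_left]
  apply tsum_congr
  intro i
  have e1 : 2*(i+N) = 2*i + 2*N := by omega
  rw [e1, pow_add, be]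
  ring

lemma expTs_mono {N : ℕ} (hN : 1 ≤ N) {a b : ℝ} (hb : 0 ≤ b) (hba : b ≤ a) :
    Real.exp (-b) * Ts N b ≤ Real.exp (-a) * Ts N a := by
  have hder : ∀ x : ℝ, HasDerivAt (fun z => Real.exp (-z) * Ts N z)
      (Real.exp (-x) * ((Sc N x - Scd N x) - Real.exp (-x))) x := by
    intro x
    have hexp : HasDerivAt (fun z : ℝ => Real.exp (-z)) (-Real.exp (-x)) x := by
      simpa [Function.comp_def] using (Real.hasDerivAt_exp (-x)).comp x (hasDerivAt_neg x)
    have h1 := hexp.fun_mul ((Real.hasDerivAt_cosh x).fun_sub (hasDerivAt_Sc N x))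
    refine h1.congr_deriv ?_
    linear_combination (-Real.exp (-x)) * (Real.cosh_sub_sinh x)
  have hmono : MonotoneOn (fun z => Real.exp (-z) * Ts N z) (Ici 0) := by
    apply monotoneOn_of_deriv_nonneg (convex_Ici 0)
    · exact fun x _ => ((hder x).continuousAt).continuousWithinAt
    · intro x _
      exact ((hder x).differentiableAt).differentiableWithinAt
    · intro x hx
      rw [(hder x).deriv]
      have hx0 : (0:ℝ) ≤ x := le_of_lt (by simpa [interior_Ici] using hx)
      have hk := key1 hN hx0
      have : (0:ℝ) < Real.exp (-x) := Real.exp_pos _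
      nlinarith
  exact hmono (mem_Ici.mpr hb) (mem_Ici.mpr (hb.trans hba)) hba

lemma al_be_step {ν : ℝ} (hν : 0 ≤ ν) {N : ℕ} (hN : 1 ≤ N) (hνN : ν ≤ (N:ℝ)) (k : ℕ) :
    al ν k * be N (k+1) ≤ al ν (k+1) * be N k := by
  have hgk := gamma_pos hν k
  have hfk : (0:ℝ) < (Nat.factorial k : ℝ) := by positivity
  have hf2 : (0:ℝ) < (Nat.factorial (2*k+2*N) : ℝ) := by positivity
  have eA : al ν (k+1) = al ν k / (4*((k:ℝ)+1)*((k:ℝ)+ν+1)) := by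
    rw [al, al, pow_succ, Nat.factorial_succ, gamma_succ hν]
    push_cast
    field_simp
  have eB : be N (k+1) = be N k / ((2*(k:ℝ)+2*(N:ℝ)+2)*(2*(k:ℝ)+2*(N:ℝ)+1)) := by
    have e1 : 2*(k+1)+2*N = (2*k+2*N)+1+1 := by omega
    rw [be, be, e1, Nat.factorial_succ, Nat.factorial_succ]
    push_cast
    field_simp
    ring
  have hal := al_pos hν k
  have hbe := be_pos N k
  have hkc : (0:ℝ) ≤ (k:ℝ) := Nat.cast_nonneg k
  have hN1 : (1:ℝ) ≤ (N:ℝ) := by exact_mod_cast hN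
  have hD1 : (0:ℝ) < 4*((k:ℝ)+1)*((k:ℝ)+ν+1) := by nlinarith
  have h4 : 4*((k:ℝ)+1)*((k:ℝ)+ν+1) ≤ (2*(k:ℝ)+2*(N:ℝ)+2)*(2*(k:ℝ)+2*(N:ℝ)+1) := by nlinarith
  rw [eA, eB, div_mul_eq_mul_div, mul_div_assoc]
  gcongr

lemma al_be_mono {ν : ℝ} (hν : 0 ≤ ν) {N : ℕ} (hN : 1 ≤ N) (hνN : ν ≤ (N:ℝ))
    {m k : ℕ} (hmk : m ≤ k) : al ν m * be N k ≤ al ν k * be N m := by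
  induction k, hmk using Nat.le_induction with
  | base => exact le_rfl
  | succ k hk ih =>
      have step := al_be_step hν hN hνN k
      have hpos : 0 < al ν k * be N k := mul_pos (al_pos hν k) (be_pos N k)
      refine le_of_mul_le_mul_left ?_ hpos
      have hmul := mul_le_mul ih step
        (mul_pos (al_pos hν k) (be_pos N (k+1))).le
        (mul_pos (al_pos hν k) (be_pos N m)).le
      calc (al ν k * be N k) * (al ν m * be N (k+1))
          = (al ν m * be N k) * (al ν k * be N (k+1)) := by ring
        _ ≤ (al ν k * be N m) * (al ν (k+1) * be N k) := hmul
        _ = (al ν k * be N k) * (al ν (k+1) * be N m) := by ring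

lemma pow_cross {a b : ℝ} (hb : 0 ≤ b) (hba : b ≤ a) {m k : ℕ} (hmk : m ≤ k) :
    a^(2*m) * b^(2*k) ≤ b^(2*m) * a^(2*k) := by
  have e1 : 2*k = 2*m + 2*(k-m) := by omega
  rw [e1, pow_add, pow_add]
  have ha : 0 ≤ a := hb.trans hba
  calc a^(2*m) * (b^(2*m) * b^(2*(k-m)))
      = (a^(2*m) * b^(2*m)) * b^(2*(k-m)) := by ring
    _ ≤ (a^(2*m) * b^(2*m)) * a^(2*(k-m)) := by
        apply mul_le_mul_of_nonneg_left (pow_le_pow_left₀ hb hba _) (by positivity)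
    _ = b^(2*m) * (a^(2*m) * a^(2*(k-m))) := by ring

lemma cheb {ν : ℝ} (hν : 0 ≤ ν) {N : ℕ} (hN : 1 ≤ N) (hνN : ν ≤ (N:ℝ))
    {a b : ℝ} (hb : 0 ≤ b) (hba : b ≤ a) :
    Gs ν b * fs N a ≤ Gs ν a * fs N b := by
  have ha : 0 ≤ a := hb.trans hba
  set f1 : ℕ → ℝ := fun m => al ν m * a^(2*m) with hf1
  set f2 : ℕ → ℝ := fun m => be N m * b^(2*m) with hf2
  set g1 : ℕ → ℝ := fun m => al ν m * b^(2*m) with hg1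
  set g2 : ℕ → ℝ := fun m => be N m * a^(2*m) with hg2
  have nn : ∀ (c : ℝ) (m : ℕ), 0 ≤ c → 0 ≤ c ^ (2*m) := fun c m hc => by positivity
  have hf1nn : ∀ m, 0 ≤ f1 m := fun m => mul_nonneg (al_pos hν m).le (nn a m ha)
  have hf2nn : ∀ m, 0 ≤ f2 m := fun m => mul_nonneg (be_pos N m).le (nn b m hb)
  have hg1nn : ∀ m, 0 ≤ g1 m := fun m => mul_nonneg (al_pos hν m).le (nn b m hb)
  have hg2nn : ∀ m, 0 ≤ g2 m := fun m => mul_nonneg (be_pos N m).le (nn a m ha)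
  have s1 : Summable f1 := summable_Gs hν a
  have s2 : Summable f2 := summable_fs N b
  have s3 : Summable g1 := summable_Gs hν b
  have s4 : Summable g2 := summable_fs N a
  have n1 : Summable (fun m => ‖f1 m‖) := by
    simpa [Real.norm_eq_abs, fun m => abs_of_nonneg (hf1nn m)] using s1
  have n2 : Summable (fun m => ‖f2 m‖) := by
    simpa [Real.norm_eq_abs, fun m => abs_of_nonneg (hf2nn m)] using s2
  have n3 : Summable (fun m => ‖g1 m‖) := by
    simpa [Real.norm_eq_abs, fun m => abs_of_nonneg (hg1nn m)] using s3
  have n4 : Summable (fun m => ‖g2 m‖) := by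
    simpa [Real.norm_eq_abs, fun m => abs_of_nonneg (hg2nn m)] using s4
  have h1 : Gs ν a * fs N b = ∑' p : ℕ × ℕ, f1 p.1 * f2 p.2 :=
    tsum_mul_tsum_of_summable_norm n1 n2
  have h2 : Gs ν b * fs N a = ∑' p : ℕ × ℕ, g1 p.1 * g2 p.2 :=
    tsum_mul_tsum_of_summable_norm n3 n4
  have sp1 : Summable (fun p : ℕ × ℕ => f1 p.1 * f2 p.2) :=
    (summable_mul_of_summable_norm n1 n2)
  have sp2 : Summable (fun p : ℕ × ℕ => g1 p.1 * g2 p.2) :=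
    (summable_mul_of_summable_norm n3 n4)
  set dif : ℕ × ℕ → ℝ := fun p => f1 p.1 * f2 p.2 - g1 p.1 * g2 p.2 with hdif
  have sd : Summable dif := sp1.sub sp2
  have sds : Summable (fun p : ℕ × ℕ => dif p.swap) := by
    have := (Equiv.prodComm ℕ ℕ).summable_iff.mpr sd
    simpa [Equiv.prodComm, Function.comp_def] using this
  have hswap : ∑' p : ℕ × ℕ, dif p = ∑' p : ℕ × ℕ, dif p.swap := by
    have := (Equiv.prodComm ℕ ℕ).tsum_eq dif
    simpa [Equiv.prodComm] using this.symm
  have hpt : ∀ p : ℕ × ℕ, 0 ≤ dif p + dif p.swap := by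
    rintro ⟨m, k⟩
    have key : dif (m, k) + dif (m, k).swap
        = (al ν m * be N k - al ν k * be N m) * (a^(2*m) * b^(2*k) - b^(2*m) * a^(2*k)) := by
      simp only [hdif, hf1, hf2, hg1, hg2, Prod.swap]
      ring
    rw [key]
    rcases le_total m k with hmk | hkm
    · have hx1 := sub_nonpos.mpr (al_be_mono hν hN hνN hmk)
      have hx2 := sub_nonpos.mpr (pow_cross hb hba hmk)
      nlinarith [mul_nonneg (neg_nonneg.mpr hx1) (neg_nonneg.mpr hx2)]
    · apply mul_nonneg
      · exact sub_nonneg.mpr (al_be_mono hν hN hνN hkm)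
      · have := pow_cross hb hba hkm
        nlinarith [pow_cross hb hba hkm]
  have hDnn : 0 ≤ ∑' p : ℕ × ℕ, dif p := by
    have h2d : (2:ℝ) * ∑' p : ℕ × ℕ, dif p = ∑' p : ℕ × ℕ, (dif p + dif p.swap) := by
      rw [Summable.tsum_add sd sds, ← hswap]
      ring
    have := tsum_nonneg (L := SummationFilter.unconditional (ℕ × ℕ)) hpt
    linarith [h2d ▸ this]
  have hsub : ∑' p : ℕ × ℕ, dif p
      = (∑' p : ℕ × ℕ, f1 p.1 * f2 p.2) - ∑' p : ℕ × ℕ, g1 p.1 * g2 p.2 :=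
    Summable.tsum_sub sp1 sp2
  rw [h1, h2]
  linarith [hsub ▸ hDnn]

lemma besselI_ratio {ν : ℝ} (hν : 0 ≤ ν) {N : ℕ} (hN : 1 ≤ N) (hνN : ν ≤ (N:ℝ))
    {a b : ℝ} (hb : 0 < b) (hba : b ≤ a) :
    Real.exp (a - b) * (b/a)^(2*N) * besselI ν b ≤ besselI ν a := by
  have ha : 0 < a := lt_of_lt_of_le hb hba
  have hfa := fs_pos N a
  have hfb := fs_pos N b
  have hGa := Gs_pos hν a
  have hGb := Gs_pos hν b
  -- step 2 : fs N a ≥ exp(a-b) (b/a)^{2N} fs N b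
  have hm := expTs_mono hN hb.le hba
  rw [Ts_eq, Ts_eq] at hm
  have step2 : Real.exp (a-b) * (b/a)^(2*N) * fs N b ≤ fs N a := by
    have h2 : Real.exp (a-b) * (b/a)^(2*N) * fs N b
        = (Real.exp (-b) * (b^(2*N) * fs N b)) * (Real.exp a / a^(2*N)) := by
      rw [div_pow, Real.exp_sub, Real.exp_neg]
      have hane : a^(2*N) ≠ 0 := by positivity
      have hene : Real.exp b ≠ 0 := (Real.exp_pos b).ne'
      field_simp
    have h3 : (Real.exp (-a) * (a^(2*N) * fs N a)) * (Real.exp a / a^(2*N)) = fs N a := by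
      rw [Real.exp_neg]
      have hane : a^(2*N) ≠ 0 := by positivity
      have hene : Real.exp a ≠ 0 := (Real.exp_pos a).ne'
      field_simp
    rw [h2, ← h3]
    apply mul_le_mul_of_nonneg_right hm (by positivity)
  -- step 1 : Gs ν a ≥ Gs ν b * (exp(a-b) (b/a)^{2N})
  have step1 : Gs ν b * (Real.exp (a-b) * (b/a)^(2*N)) ≤ Gs ν a := by
    refine le_of_mul_le_mul_right ?_ hfb
    calc Gs ν b * (Real.exp (a-b) * (b/a)^(2*N)) * fs N b
        = Gs ν b * (Real.exp (a-b) * (b/a)^(2*N) * fs N b) := by ring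
      _ ≤ Gs ν b * fs N a := by
          apply mul_le_mul_of_nonneg_left step2 hGb.le
      _ ≤ Gs ν a * fs N b := cheb hν hN hνN hb.le hba
  have hrpow : (b/2) ^ ν ≤ (a/2) ^ ν :=
    Real.rpow_le_rpow (by positivity) (by linarith) hν
  rw [besselI_eq hν hb, besselI_eq hν ha]
  calc Real.exp (a - b) * (b/a)^(2*N) * ((b/2) ^ ν * Gs ν b)
      = (b/2) ^ ν * (Gs ν b * (Real.exp (a-b) * (b/a)^(2*N))) := by ring
    _ ≤ (b/2) ^ ν * Gs ν a := by
        apply mul_le_mul_of_nonneg_left step1 (by positivity)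
    _ ≤ (a/2) ^ ν * Gs ν a := by
        apply mul_le_mul_of_nonneg_right hrpow hGa.le

end BesselAux

set_option maxHeartbeats 1000000 in
/-- Lower bound for the ratio of Bessel transition densities with
shifted starting point: for `d ≥ 2`, `ν = d/2 − 1`, there is `C < ∞` (depending only
on `d`) with `p^{(d)}(1,y;u)/p^{(d)}(1−δ,y;u) ≥ 1 − δ(1−y)/u − Cδ` for all
`δ, y ∈ (0,1)` and `u > δ`. -/
theorem besselDensity_ratio_lower_bound (d : ℝ) (hd : 2 ≤ d) :
    ∃ C : ℝ, 0 ≤ C ∧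
      ∀ δ ∈ Ioo (0 : ℝ) 1, ∀ y ∈ Ioo (0 : ℝ) 1, ∀ u : ℝ, δ < u →
        besselDensity (d / 2 - 1) 1 y u / besselDensity (d / 2 - 1) (1 - δ) y u
          ≥ 1 - δ * (1 - y) / u - C * δ := by
  open BesselAux in
  set ν : ℝ := d / 2 - 1 with hνdef
  have hν : 0 ≤ ν := by simp only [hνdef]; linarith
  set N : ℕ := ⌈ν⌉₊ + 1 with hNdef
  have hN : 1 ≤ N := by omega
  have hνN : ν ≤ (N:ℝ) := by
    have := Nat.le_ceil ν
    have h2 : ((⌈ν⌉₊ : ℝ)) ≤ (N:ℝ) := by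
      simp only [hNdef]; push_cast; linarith
    linarith
  refine ⟨ν + 2*N, by positivity, ?_⟩
  rintro δ ⟨hδ0, hδ1⟩ y ⟨hy0, hy1⟩ u hδu
  have hu : 0 < u := lt_trans hδ0 hδu
  set a : ℝ := 1 * y / u with hadef
  set b : ℝ := (1 - δ) * y / u with hbdef
  have hb : 0 < b := by
    apply div_pos (mul_pos (by linarith) hy0) hu
  have hba : b ≤ a := by
    apply (div_le_div_iff_of_pos_right hu).mpr
    nlinarith
  have ha : 0 < a := lt_of_lt_of_le hb hba
  -- positivity of the denominator density
  have hI_b : 0 < besselI ν b := besselI_pos hν hb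
  have hI_a : 0 < besselI ν a := besselI_pos hν ha
  have hp2 : 0 < besselDensity ν (1 - δ) y u := by
    rw [besselDensity]
    have h1 : 0 < y / u := div_pos hy0 hu
    have h2 : (0:ℝ) < y / (1-δ) := div_pos hy0 (by linarith)
    have h3 : (0:ℝ) < (y / (1-δ)) ^ ν := Real.rpow_pos_of_pos h2 ν
    have h4 : (0:ℝ) < Real.exp (-((1-δ)^2 + y^2) / (2*u)) := Real.exp_pos _
    positivity
  rw [ge_iff_le, le_div_iff₀ hp2]
  -- core Bessel inequality
  have hcore := besselI_ratio hν hN hνN hb hba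
  have h1δ : (0:ℝ) < 1 - δ := by linarith
  have hab : b / a = 1 - δ := by
    rw [hadef, hbdef]
    field_simp
  have hamb : a - b = δ * y / u := by
    rw [hadef, hbdef]; field_simp; ring
  set t : ℝ := δ * (1 - y) / u with htdef
  have ht0 : 0 ≤ t := by
    rw [htdef]
    have h1y : (0:ℝ) ≤ 1 - y := by linarith
    positivity
  have ht1 : t < 1 := by
    rw [htdef, div_lt_one hu]; nlinarith
  set M : ℝ := ν + 2*(N:ℝ) with hMdef
  have hM1 : (1:ℝ) ≤ M := by
    have : (1:ℝ) ≤ (N:ℝ) := by exact_mod_cast hN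
    rw [hMdef]; linarith
  have hM0 : 0 ≤ M := by linarith
  have hbern : 1 - M * δ ≤ (1-δ) ^ M := by
    have h := one_add_mul_self_le_rpow_one_add (show (-1:ℝ) ≤ -δ by linarith) hM1
    rw [show (1:ℝ) + -δ = 1 - δ by ring] at h
    linarith [h]
  have hrpow_split : (1-δ) ^ M = (1-δ) ^ ν * (1-δ) ^ (2*N : ℕ) := by
    rw [hMdef, Real.rpow_add h1δ]
    congr 1
    rw [← Real.rpow_natCast (1-δ) (2*N)]
    congr 1
    push_cast; ring
  set W : ℝ := δ*y/u - δ*(2-δ)/(2*u) with hWdef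
  clear_value ν N a b t M W
  have hWt : -t ≤ W := by
    have he : W - (-t) = δ^2/(2*u) := by
      rw [hWdef, htdef]; field_simp; ring
    have hpos : (0:ℝ) ≤ δ^2/(2*u) := by positivity
    linarith
  have hexp1t : 1 - t ≤ Real.exp W := by
    calc 1 - t = (-t) + 1 := by ring
      _ ≤ Real.exp (-t) := Real.add_one_le_exp _
      _ ≤ Real.exp W := Real.exp_le_exp.mpr hWt
  have hscal0 : 1 - t - M * δ ≤ (1-δ) ^ M * Real.exp W := by
    have hr0 : (0:ℝ) ≤ (1-δ) ^ M := (Real.rpow_pos_of_pos h1δ M).le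
    have c1 : (1-δ) ^ M * (1 - t) ≤ (1-δ) ^ M * Real.exp W :=
      mul_le_mul_of_nonneg_left hexp1t hr0
    have c2 : (1 - M*δ) * (1 - t) ≤ (1-δ) ^ M * (1 - t) :=
      mul_le_mul_of_nonneg_right hbern (by linarith)
    nlinarith [mul_nonneg (mul_nonneg hM0 hδ0.le) ht0]
  have hexpW : Real.exp (-((1-δ)^2+y^2)/(2*u)) * Real.exp W
      = Real.exp (-(1^2+y^2)/(2*u)) * Real.exp (δ*y/u) := by
    rw [← Real.exp_add, ← Real.exp_add, hWdef]
    congr 1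
    field_simp
    ring
  -- scalar inequality including the rpow factors
  have hyν : (0:ℝ) < y ^ ν := Real.rpow_pos_of_pos hy0 ν
  have h1δν : (0:ℝ) < (1-δ) ^ ν := Real.rpow_pos_of_pos h1δ ν
  have hdivν : (y/(1-δ)) ^ ν = y ^ ν / (1-δ) ^ ν := Real.div_rpow hy0.le h1δ.le ν
  have hscal : (1 - t - M*δ) * ((y/(1-δ)) ^ ν * Real.exp (-((1-δ)^2+y^2)/(2*u)))
      ≤ y ^ ν * Real.exp (-(1^2+y^2)/(2*u)) * (Real.exp (a-b) * (b/a)^(2*N)) := by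
    rw [hdivν, hab, hamb]
    have hE : ((1-δ) ^ ν * (1-δ) ^ (2*N : ℕ) * Real.exp W) * (Real.exp (-((1-δ)^2+y^2)/(2*u)) / (1-δ)^ν)
        = Real.exp (-(1^2+y^2)/(2*u)) * (Real.exp (δ*y/u) * (1-δ)^(2*N)) := by
      calc ((1-δ) ^ ν * (1-δ) ^ (2*N : ℕ) * Real.exp W) * (Real.exp (-((1-δ)^2+y^2)/(2*u)) / (1-δ)^ν)
          = ((1-δ) ^ ν / (1-δ) ^ ν) * ((1-δ) ^ (2*N : ℕ) * (Real.exp (-((1-δ)^2+y^2)/(2*u)) * Real.exp W)) := by ring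
        _ = (1-δ) ^ (2*N : ℕ) * (Real.exp (-((1-δ)^2+y^2)/(2*u)) * Real.exp W) := by
            rw [div_self h1δν.ne', one_mul]
        _ = (1-δ) ^ (2*N : ℕ) * (Real.exp (-(1^2+y^2)/(2*u)) * Real.exp (δ*y/u)) := by rw [hexpW]
        _ = Real.exp (-(1^2+y^2)/(2*u)) * (Real.exp (δ*y/u) * (1-δ)^(2*N)) := by ring
    calc (1 - t - M*δ) * (y ^ ν / (1-δ) ^ ν * Real.exp (-((1-δ)^2+y^2)/(2*u)))
        = ((1 - t - M*δ) * y ^ ν) * (Real.exp (-((1-δ)^2+y^2)/(2*u)) / (1-δ)^ν) := by ring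
      _ ≤ (((1-δ)^M * Real.exp W) * y ^ ν) * (Real.exp (-((1-δ)^2+y^2)/(2*u)) / (1-δ)^ν) := by
          apply mul_le_mul_of_nonneg_right (mul_le_mul_of_nonneg_right hscal0 hyν.le) (by positivity)
      _ = y ^ ν * (((1-δ) ^ ν * (1-δ) ^ (2*N : ℕ) * Real.exp W) * (Real.exp (-((1-δ)^2+y^2)/(2*u)) / (1-δ)^ν)) := by
          rw [hrpow_split]; ring
      _ = y ^ ν * (Real.exp (-(1^2+y^2)/(2*u)) * (Real.exp (δ*y/u) * (1-δ)^(2*N))) := by rw [hE]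
      _ = y ^ ν * Real.exp (-(1^2+y^2)/(2*u)) * (Real.exp (δ*y/u) * (1-δ)^(2*N)) := by ring
  -- final assembly
  have hyν1 : (0:ℝ) < (y/1) ^ ν := by rw [div_one]; exact hyν
  calc (1 - t - M*δ) * besselDensity ν (1-δ) y u
      = ((1 - t - M*δ) * ((y/(1-δ)) ^ ν * Real.exp (-((1-δ)^2+y^2)/(2*u)))) * ((y/u) * besselI ν b) := by
        rw [besselDensity, ← hbdef, htdef]; ring
    _ ≤ (y ^ ν * Real.exp (-(1^2+y^2)/(2*u)) * (Real.exp (a-b) * (b/a)^(2*N))) * ((y/u) * besselI ν b) := by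
        apply mul_le_mul_of_nonneg_right hscal
        positivity
    _ = ((y/u) * (y/1) ^ ν * Real.exp (-(1^2+y^2)/(2*u))) * (Real.exp (a-b) * (b/a)^(2*N) * besselI ν b) := by
        rw [div_one]; ring
    _ ≤ ((y/u) * (y/1) ^ ν * Real.exp (-(1^2+y^2)/(2*u))) * besselI ν a := by
        apply mul_le_mul_of_nonneg_left hcore
        positivity
    _ = besselDensity ν 1 y u := by
        rw [besselDensity, ← hadef]
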